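/- For every n, the (n+1)×(n+1) matrix whose (m,k) entry (0 ≤ m,k ≤ n) is the Lah number L(m,k) is totally non-negative. -/

import Mathlib

open Polynomial Finset

/-- A real square matrix is totally non-negative if every minor (determinant of a
square submatrix selected by strictly increasing row indices and strictly increasing
column indices) is non-negative. -/
def TNN {N : ℕ} (A : Matrix (Fin N) (Fin N) ℝ) : Prop :=
  ∀ (r : ℕ) (ρ γ : Fin r → Fin N), StrictMono ρ → StrictMono γ →
    0 ≤ (A.submatrix ρ γ).det

/-- The Lah numbers: `L(0,0) = 1`, `L(m,k) = (m!/k!) · C(m-1, k-1)` for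
`1 ≤ k ≤ m`, and `L(m,k) = 0` otherwise. -/
def lah (m k : ℕ) : ℕ :=
  if m = 0 ∧ k = 0 then 1
  else if 1 ≤ k ∧ k ≤ m then (Nat.factorial m / Nat.factorial k) * Nat.choose (m - 1) (k - 1)
  else 0

open Matrix Equiv Equiv.Perm

lemma perm_strictMono_eq_id {r : ℕ} (σ : Equiv.Perm (Fin r)) (hσ : StrictMono σ) :
    ∀ i, σ i = i := by
  have hsymm : StrictMono σ.symm := fun a b h => by
    rw [← hσ.lt_iff_lt]; simpa using h
  intro i
  haveI : WellFoundedLT (Fin r) := inferInstance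
  have h1 : i ≤ σ i := hσ.le_apply
  have h2 : σ i ≤ σ.symm (σ i) := hsymm.le_apply
  refine le_antisymm ?_ h1
  simpa using h2

lemma det_one_submatrix {r N : ℕ} (ρ γ : Fin r → Fin N) (hρ : StrictMono ρ)
    (hγ : StrictMono γ) :
    ((1 : Matrix (Fin N) (Fin N) ℝ).submatrix ρ γ).det = if ρ = γ then 1 else 0 := by
  split_ifs with h
  · subst h
    have : (1 : Matrix (Fin N) (Fin N) ℝ).submatrix ρ ρ = 1 := by
      ext i j
      by_cases hij : i = j
      · subst hij; simp
      · simp [Matrix.one_apply, hρ.injective.ne hij, hij]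
    rw [this, det_one]
  · rw [Matrix.det_apply]
    apply Finset.sum_eq_zero
    intro σ _
    by_cases hall : ∀ i, ρ (σ i) = γ i
    · exfalso
      have hmono : StrictMono (⇑σ) := fun a b hab => by
        rw [← hρ.lt_iff_lt, hall a, hall b]
        exact hγ hab
      apply h
      funext i
      rw [← hall i, perm_strictMono_eq_id σ hmono i]
    · push_neg at hall
      obtain ⟨i, hi⟩ := hall
      have h0 : (fun j => (1 : Matrix (Fin N) (Fin N) ℝ).submatrix ρ γ (σ j) j) i = 0 := by
        simp [Matrix.one_apply, hi]
      have hz : ∏ j : Fin r, (1 : Matrix (Fin N) (Fin N) ℝ).submatrix ρ γ (σ j) j = 0 :=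
        Finset.prod_eq_zero (Finset.mem_univ i) h0
      rw [hz, smul_zero]

lemma det_one_submatrix_nonneg {r N : ℕ} (ρ γ : Fin r → Fin N) (hρ : StrictMono ρ)
    (hγ : StrictMono γ) :
    0 ≤ ((1 : Matrix (Fin N) (Fin N) ℝ).submatrix ρ γ).det := by
  rw [det_one_submatrix ρ γ hρ hγ]; split_ifs <;> norm_num

lemma TNN_one_add_std {N : ℕ} (a b : Fin N) (hab : (a : ℕ) = (b : ℕ) + 1)
    (c : ℝ) (hc : 0 ≤ c) :
    TNN ((1 : Matrix (Fin N) (Fin N) ℝ) + Matrix.single a b c) := by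
  have hba : b < a := by rw [Fin.lt_def, hab]; omega
  intro r ρ γ hρ hγ
  by_cases hi0 : ∃ i0, ρ i0 = a
  swap
  · have hsub : ((1 : Matrix (Fin N) (Fin N) ℝ) + Matrix.single a b c).submatrix ρ γ
        = (1 : Matrix (Fin N) (Fin N) ℝ).submatrix ρ γ := by
      ext i j
      have hne : a ≠ ρ i := fun h => hi0 ⟨i, h.symm⟩
      simp [Matrix.add_apply, Matrix.single_apply_of_row_ne hne]
    rw [hsub]; exact det_one_submatrix_nonneg ρ γ hρ hγ
  by_cases hj0 : ∃ j0, γ j0 = b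
  swap
  · have hsub : ((1 : Matrix (Fin N) (Fin N) ℝ) + Matrix.single a b c).submatrix ρ γ
        = (1 : Matrix (Fin N) (Fin N) ℝ).submatrix ρ γ := by
      ext i j
      have hne : b ≠ γ j := fun h => hj0 ⟨j, h.symm⟩
      simp [Matrix.add_apply, Matrix.single_apply_of_col_ne _ _ hne]
    rw [hsub]; exact det_one_submatrix_nonneg ρ γ hρ hγ
  obtain ⟨i0, hi0⟩ := hi0
  obtain ⟨j0, hj0⟩ := hj0
  set M : Matrix (Fin r) (Fin r) ℝ := (1 : Matrix (Fin N) (Fin N) ℝ).submatrix ρ γ with hM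
  set u : Fin r → ℝ := Pi.single j0 (1:ℝ) with hu
  have hsub : ((1 : Matrix (Fin N) (Fin N) ℝ) + Matrix.single a b c).submatrix ρ γ
      = M.updateRow i0 (M i0 + c • u) := by
    ext i j
    by_cases hii : i = i0
    · rw [hii, Matrix.updateRow_self]
      have hst : Matrix.single a b c (ρ i0) (γ j) = c * u j := by
        by_cases hjj : j = j0
        · rw [hjj, hi0, hj0]; simp [hu]
        · have hne : b ≠ γ j := fun h => hjj (hγ.injective (h.symm.trans hj0.symm))
          rw [Matrix.single_apply_of_col_ne _ _ hne]
          simp [hu, Pi.single_apply, hjj]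
      simp only [Matrix.submatrix_apply, Matrix.add_apply, hst, Pi.add_apply, Pi.smul_apply,
        smul_eq_mul, hM]
    · rw [Matrix.updateRow_ne hii]
      have hne : a ≠ ρ i := fun h => hii (hρ.injective (h.symm.trans hi0.symm))
      simp [Matrix.add_apply, Matrix.single_apply_of_row_ne hne, hM]
  rw [hsub, Matrix.det_updateRow_add, Matrix.det_updateRow_smul, Matrix.updateRow_eq_self]
  have h1 : 0 ≤ M.det := det_one_submatrix_nonneg ρ γ hρ hγ
  have h2 : 0 ≤ (M.updateRow i0 u).det := by
    by_cases hb : ∃ i1, ρ i1 = b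
    · obtain ⟨i1, hi1⟩ := hb
      have hne : i1 ≠ i0 := by
        intro h; subst h
        rw [hi0] at hi1
        have : (a : ℕ) = (b : ℕ) := congrArg Fin.val hi1
        omega
      have hrow : (M.updateRow i0 u) i1 = (M.updateRow i0 u) i0 := by
        rw [Matrix.updateRow_ne hne, Matrix.updateRow_self]
        funext j
        by_cases hjj : j = j0
        · rw [hjj]; simp [hM, hu, Matrix.one_apply, hi1, hj0]
        · have hne' : γ j ≠ b := fun h => hjj (hγ.injective (h.trans hj0.symm))
          simp [hM, hu, Matrix.one_apply, hi1, Pi.single_apply, hjj, Ne.symm hne']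
      rw [Matrix.det_zero_of_row_eq hne hrow]
    · set ρ' : Fin r → Fin N := Function.update ρ i0 b with hρ'
      have hmono : StrictMono ρ' := by
        intro x y hxy
        rcases eq_or_ne x i0 with hx | hx <;> rcases eq_or_ne y i0 with hy | hy
        · exact absurd (hx.trans hy.symm) (ne_of_lt hxy)
        · rw [hx, hρ', Function.update_self, Function.update_of_ne hy]
          calc b < a := hba
            _ = ρ i0 := hi0.symm
            _ ≤ ρ y := (hρ.le_iff_le).mpr (le_of_lt (hx ▸ hxy))
        · rw [hy, hρ', Function.update_of_ne hx, Function.update_self]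
          have h1 : ρ x < a := hi0 ▸ hρ (hy ▸ hxy)
          have h2 : ρ x ≠ b := fun h => hb ⟨x, h⟩
          rw [Fin.lt_def] at h1 ⊢
          rw [hab] at h1
          have : (ρ x : ℕ) ≠ (b : ℕ) := fun h => h2 (Fin.ext h)
          omega
        · rw [hρ', Function.update_of_ne hx, Function.update_of_ne hy]
          exact hρ hxy
      have heq : M.updateRow i0 u = (1 : Matrix (Fin N) (Fin N) ℝ).submatrix ρ' γ := by
        ext i j
        by_cases hii : i = i0
        · rw [hii, Matrix.updateRow_self]
          by_cases hjj : j = j0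
          · rw [hjj]; simp [hρ', hu, Matrix.one_apply, hj0]
          · have hne' : γ j ≠ b := fun h => hjj (hγ.injective (h.trans hj0.symm))
            simp [hρ', hu, Matrix.one_apply, Pi.single_apply, hjj, Ne.symm hne']
        · rw [Matrix.updateRow_ne hii]
          simp only [hM, Matrix.submatrix_apply]
          rw [hρ', Function.update_of_ne hii]
      rw [heq]
      exact det_one_submatrix_nonneg ρ' γ hmono hγ
  positivity

open Filter
open scoped Classical
open Fin.NatCast

local notation "εr" σ:arg => ((Equiv.Perm.sign σ : ℤ) : ℝ)

lemma cb_aux {r N : ℕ} (A : Matrix (Fin r) (Fin N) ℝ) (B : Matrix (Fin N) (Fin r) ℝ)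
    {p : Fin r → Fin N} (H : ¬Function.Injective p) :
    (∑ σ : Perm (Fin r), εr σ * ∏ x, A (σ x) (p x) * B (p x) x) = 0 := by
  obtain ⟨i, j, hpij, hij⟩ : ∃ i j, p i = p j ∧ i ≠ j := by
    rw [Function.Injective] at H
    push_neg at H
    obtain ⟨i, j, h1, h2⟩ := H
    exact ⟨i, j, h1, h2⟩
  exact Finset.sum_involution (fun σ _ => σ * Equiv.swap i j)
    (fun σ _ => by
      have : (∏ x, A (σ x) (p x)) = ∏ x, A ((σ * Equiv.swap i j) x) (p x) :=
        Fintype.prod_equiv (Equiv.swap i j) _ _ (by simp [Equiv.apply_swap_eq_self hpij])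
      simp [this, sign_swap hij, -sign_swap', prod_mul_distrib])
    (fun σ _ _ => (not_congr mul_swap_eq_iff).mpr hij) (fun _ _ => Finset.mem_univ _)
    fun σ _ => mul_swap_involutive i j σ

lemma cb_step1 {r : ℕ} (M N' : Matrix (Fin r) (Fin r) ℝ) :
    (M * N').det = ∑ q : Fin r → Fin r, ∑ σ : Perm (Fin r),
      εr σ * ∏ i, M (σ i) (q i) * N' (q i) i := by
  simp only [det_apply', Matrix.mul_apply, prod_univ_sum, mul_sum, Fintype.piFinset_univ]
  rw [Finset.sum_comm]

lemma cb_step1' {r N : ℕ} (A : Matrix (Fin r) (Fin N) ℝ) (B : Matrix (Fin N) (Fin r) ℝ) :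
    (A * B).det = ∑ p : Fin r → Fin N, ∑ σ : Perm (Fin r),
      εr σ * ∏ i, A (σ i) (p i) * B (p i) i := by
  simp only [det_apply', Matrix.mul_apply, prod_univ_sum, mul_sum, Fintype.piFinset_univ]
  rw [Finset.sum_comm]

lemma cb_inner {r N : ℕ} (A : Matrix (Fin r) (Fin N) ℝ) (B : Matrix (Fin N) (Fin r) ℝ)
    (f : Fin r → Fin N) (hf : Function.Injective f) :
    (∑ τ : Perm (Fin r), ∑ σ : Perm (Fin r),
        εr σ * ∏ i, A (σ i) (f (τ i)) * B (f (τ i)) i)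
      = (A.submatrix id f).det * (B.submatrix f id).det := by
  rw [← det_mul, cb_step1]
  symm
  calc ∑ q : Fin r → Fin r, ∑ σ : Perm (Fin r),
          εr σ * ∏ i, (A.submatrix id f) (σ i) (q i) * (B.submatrix f id) (q i) i
      = ∑ q : Fin r → Fin r, ∑ σ : Perm (Fin r),
          εr σ * ∏ i, A (σ i) (f (q i)) * B (f (q i)) i := by
        simp only [submatrix_apply, id_eq]
    _ = ∑ q ∈ univ.filter (fun q : Fin r → Fin r => Function.Bijective q),
          ∑ σ : Perm (Fin r), εr σ * ∏ i, A (σ i) (f (q i)) * B (f (q i)) i := by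
        refine (Finset.sum_subset (filter_subset _ _) fun q _ hq => ?_).symm
        have hq' : ¬Function.Bijective q := by simpa using hq
        have hni : ¬Function.Injective (f ∘ q) := by
          intro h
          exact hq' (Finite.injective_iff_bijective.mp fun x y hxy => h (by simp [hxy]))
        exact cb_aux A B hni
    _ = ∑ τ : Perm (Fin r), ∑ σ : Perm (Fin r),
          εr σ * ∏ i, A (σ i) (f (τ i)) * B (f (τ i)) i := by
        refine Finset.sum_bij
          (fun q h => Equiv.ofBijective q (by simpa using (Finset.mem_filter.1 h).2))
          (fun _ _ => Finset.mem_univ _) (fun _ _ _ _ h => by injection h)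
          (fun b _ => ⟨b, Finset.mem_filter.2 ⟨Finset.mem_univ _, b.bijective⟩,
            Equiv.coe_fn_injective rfl⟩)
          fun _ _ => rfl

lemma sum_injective_eq {M : Type*} [AddCommMonoid M] {r N : ℕ} (F : (Fin r → Fin N) → M) :
    ∑ p ∈ univ.filter (fun p : Fin r → Fin N => Function.Injective p), F p
      = ∑ x ∈ (univ.filter (fun f : Fin r → Fin N => StrictMono f))
            ×ˢ (univ : Finset (Perm (Fin r))), F (x.1 ∘ x.2) := by
  have hcard : ∀ (p : Fin r → Fin N), Function.Injective p →
      (Finset.image p univ).card = r := fun p hp => by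
    rw [Finset.card_image_of_injective _ hp, Finset.card_univ, Fintype.card_fin]
  symm
  refine Finset.sum_bij (fun x _ => x.1 ∘ x.2) ?_ ?_ ?_ ?_
  · rintro ⟨g, τ⟩ hx
    have hg : StrictMono g := (Finset.mem_filter.1 (Finset.mem_product.1 hx).1).2
    exact Finset.mem_filter.2 ⟨Finset.mem_univ _, hg.injective.comp τ.injective⟩
  · rintro ⟨g, τ⟩ hx ⟨g', τ'⟩ hx' heq
    have hg : StrictMono g := (Finset.mem_filter.1 (Finset.mem_product.1 hx).1).2
    have hg' : StrictMono g' := (Finset.mem_filter.1 (Finset.mem_product.1 hx').1).2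
    simp only at heq
    have himg : Finset.image g univ = Finset.image g' univ := by
      have h1 : Finset.image (g ∘ τ) univ = Finset.image g univ := by
        rw [← Finset.image_image, Finset.image_univ_equiv]
      have h2 : Finset.image (g' ∘ τ') univ = Finset.image g' univ := by
        rw [← Finset.image_image, Finset.image_univ_equiv]
      rw [← h1, ← h2, heq]
    have hgg : g = g' := by
      have e1 : g = (Finset.image g univ).orderEmbOfFin (hcard g hg.injective) :=
        Finset.orderEmbOfFin_unique _ (fun x => Finset.mem_image_of_mem _ (Finset.mem_univ x)) hg
      have e2 : g' = (Finset.image g univ).orderEmbOfFin (hcard g hg.injective) :=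
        Finset.orderEmbOfFin_unique _
          (fun x => himg ▸ Finset.mem_image_of_mem _ (Finset.mem_univ x)) hg'
      exact e1.trans e2.symm
    subst hgg
    have hττ : τ = τ' := Equiv.ext fun x => hg.injective (congrFun heq x)
    rw [hττ]
  · intro p hp
    have hpinj : Function.Injective p := (Finset.mem_filter.1 hp).2
    set s := Finset.image p univ with hs
    have hc : s.card = r := hcard p hpinj
    have hmem : ∀ x, p x ∈ s := fun x => Finset.mem_image_of_mem _ (Finset.mem_univ x)
    set τfun : Fin r → Fin r := fun x => (s.orderIsoOfFin hc).symm ⟨p x, hmem x⟩ with hτ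
    have hτinj : Function.Injective τfun := by
      intro x y hxy
      have h2 : ((s.orderIsoOfFin hc) (τfun x) : Fin N)
          = ((s.orderIsoOfFin hc) (τfun y) : Fin N) := by rw [hxy]
      simp only [hτ, OrderIso.apply_symm_apply] at h2
      exact hpinj h2
    refine ⟨⟨⇑(s.orderEmbOfFin hc), Equiv.ofBijective τfun
      (Finite.injective_iff_bijective.mp hτinj)⟩, ?_, ?_⟩
    · refine Finset.mem_product.2 ⟨Finset.mem_filter.2 ⟨Finset.mem_univ _, ?_⟩, Finset.mem_univ _⟩
      exact (s.orderEmbOfFin hc).strictMono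
    · funext x
      simp only [Function.comp_apply, Equiv.ofBijective_apply, hτ]
      rw [← Finset.coe_orderIsoOfFin_apply, OrderIso.apply_symm_apply]
  · exact fun _ _ => rfl

lemma cauchy_binet {r N : ℕ} (A : Matrix (Fin r) (Fin N) ℝ) (B : Matrix (Fin N) (Fin r) ℝ) :
    (A * B).det = ∑ f ∈ univ.filter (fun f : Fin r → Fin N => StrictMono f),
      (A.submatrix id f).det * (B.submatrix f id).det := by
  calc (A * B).det
      = ∑ p : Fin r → Fin N, ∑ σ : Perm (Fin r), εr σ * ∏ i, A (σ i) (p i) * B (p i) i :=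
        cb_step1' A B
    _ = ∑ p ∈ univ.filter (fun p : Fin r → Fin N => Function.Injective p),
          ∑ σ : Perm (Fin r), εr σ * ∏ i, A (σ i) (p i) * B (p i) i := by
        refine (Finset.sum_subset (filter_subset _ _) fun p _ hp => ?_).symm
        exact cb_aux A B (by simpa using hp)
    _ = ∑ x ∈ (univ.filter (fun f : Fin r → Fin N => StrictMono f))
          ×ˢ (univ : Finset (Perm (Fin r))),
          ∑ σ : Perm (Fin r), εr σ * ∏ i, A (σ i) ((x.1 ∘ x.2) i) * B ((x.1 ∘ x.2) i) i :=
        sum_injective_eq (fun p => ∑ σ : Perm (Fin r), εr σ * ∏ i, A (σ i) (p i) * B (p i) i)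
    _ = ∑ f ∈ univ.filter (fun f : Fin r → Fin N => StrictMono f), ∑ τ : Perm (Fin r),
          ∑ σ : Perm (Fin r), εr σ * ∏ i, A (σ i) (f (τ i)) * B (f (τ i)) i := by
        rw [Finset.sum_product]
        rfl
    _ = ∑ f ∈ univ.filter (fun f : Fin r → Fin N => StrictMono f),
          (A.submatrix id f).det * (B.submatrix f id).det := by
        refine Finset.sum_congr rfl fun f hf => ?_
        exact cb_inner A B f ((Finset.mem_filter.1 hf).2).injective

lemma TNN_one {N : ℕ} : TNN (1 : Matrix (Fin N) (Fin N) ℝ) :=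
  fun _ ρ γ hρ hγ => det_one_submatrix_nonneg ρ γ hρ hγ

lemma TNN_mul {N : ℕ} {A B : Matrix (Fin N) (Fin N) ℝ} (hA : TNN A) (hB : TNN B) :
    TNN (A * B) := by
  intro r ρ γ hρ hγ
  have hsub : (A * B).submatrix ρ γ = (A.submatrix ρ id) * (B.submatrix id γ) := by
    ext i j
    simp [Matrix.mul_apply]
  rw [hsub, cauchy_binet]
  refine Finset.sum_nonneg fun f hf => ?_
  have hfm : StrictMono f := (Finset.mem_filter.1 hf).2
  have e1 : (A.submatrix ρ id).submatrix id f = A.submatrix ρ f := by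
    rw [Matrix.submatrix_submatrix]; rfl
  have e2 : (B.submatrix id γ).submatrix f id = B.submatrix f γ := by
    rw [Matrix.submatrix_submatrix]; rfl
  rw [e1, e2]
  exact mul_nonneg (hA r ρ f hρ hfm) (hB r f γ hfm hγ)

noncomputable def elemProd (n : ℕ) (c : ℕ → ℝ) : ℕ → Matrix (Fin (n+1)) (Fin (n+1)) ℝ
  | 0 => 1
  | (m+1) => elemProd n c m *
      ((1 : Matrix (Fin (n+1)) (Fin (n+1)) ℝ) + Matrix.single ((↑(m+1) : Fin (n+1))) ((↑m : Fin (n+1))) (c m))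

lemma elemProd_eq (n : ℕ) (c : ℕ → ℝ) (m : ℕ) (hm : m ≤ n) :
    elemProd n c m = 1 + ∑ i ∈ Finset.range m,
      Matrix.single ((↑(i+1) : Fin (n+1))) ((↑i : Fin (n+1))) (c i) := by
  induction m with
  | zero => rw [elemProd]; simp
  | succ m ih =>
    have hm' : m ≤ n := by omega
    rw [elemProd, ih hm']
    rw [Finset.sum_range_succ]
    set S := ∑ i ∈ Finset.range m, Matrix.single ((↑(i+1) : Fin (n+1))) ((↑i : Fin (n+1))) (c i) with hS
    set E := Matrix.single ((↑(m+1) : Fin (n+1))) ((↑m : Fin (n+1))) (c m) with hE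
    have hSE : S * E = 0 := by
      rw [hS, Finset.sum_mul]
      refine Finset.sum_eq_zero fun i hi => ?_
      have hi' : i < m := Finset.mem_range.1 hi
      apply Matrix.single_mul_single_of_ne
      intro h
      have h1 : ((↑i : Fin (n+1)) : ℕ) = i := Fin.val_cast_of_lt (by omega)
      have h2 : ((↑(m+1) : Fin (n+1)) : ℕ) = m + 1 := Fin.val_cast_of_lt (by omega)
      rw [h] at h1
      omega
    rw [mul_add, add_mul, add_mul, one_mul, mul_one, hSE]
    rw [one_mul, hE]
    abel
lemma TNN_elemProd (n : ℕ) (c : ℕ → ℝ) (hc : ∀ i, 0 ≤ c i) (m : ℕ) (hm : m ≤ n) :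
    TNN (elemProd n c m) := by
  induction m with
  | zero => exact TNN_one
  | succ m ih =>
    rw [elemProd]
    refine TNN_mul (ih (by omega)) (TNN_one_add_std _ _ ?_ _ (hc m))
    rw [Fin.val_cast_of_lt (by omega : m + 1 < n + 1), Fin.val_cast_of_lt (by omega : m < n + 1)]

lemma TNN_unit_lower (n : ℕ) (c : ℕ → ℝ) (hc : ∀ i, 0 ≤ c i) :
    TNN ((1 : Matrix (Fin (n+1)) (Fin (n+1)) ℝ) + ∑ i ∈ Finset.range n,
      Matrix.single ((↑(i+1) : Fin (n+1))) ((↑i : Fin (n+1))) (c i)) := by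
  rw [← elemProd_eq n c n le_rfl]
  exact TNN_elemProd n c hc n le_rfl

lemma TNN_pow {N : ℕ} {A : Matrix (Fin N) (Fin N) ℝ} (hA : TNN A) (t : ℕ) : TNN (A ^ t) := by
  induction t with
  | zero => simpa using TNN_one
  | succ t ih => rw [pow_succ]; exact TNN_mul ih hA

noncomputable def Nmat (n : ℕ) : Matrix (Fin (n+1)) (Fin (n+1)) ℝ :=
  ∑ i ∈ Finset.range n, Matrix.single ((↑(i+1) : Fin (n+1))) ((↑i : Fin (n+1)))
    (((i*(i+1) : ℕ) : ℝ))

lemma Nmat_apply (n : ℕ) (m k : Fin (n+1)) :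
    Nmat n m k = if (m : ℕ) = (k : ℕ) + 1 then (((k : ℕ) * ((k : ℕ)+1) : ℕ) : ℝ) else 0 := by
  rw [Nmat, Matrix.sum_apply]
  by_cases hmk : (m : ℕ) = (k : ℕ) + 1
  · have hk : (k : ℕ) < n := by have := m.isLt; omega
    rw [if_pos hmk]
    rw [Finset.sum_eq_single (k : ℕ)]
    · have h1 : ((↑((k:ℕ)+1) : Fin (n+1))) = m := by
        apply Fin.ext
        rw [Fin.val_cast_of_lt (by omega)]
        omega
      have h2 : ((↑(k:ℕ) : Fin (n+1))) = k := Fin.cast_val_eq_self k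
      rw [h1, h2, Matrix.single_apply_same]
    · intro i hi hne
      apply Matrix.single_apply_of_ne
      rintro ⟨h1, h2⟩
      apply hne
      have : ((↑i : Fin (n+1)) : ℕ) = i := Fin.val_cast_of_lt (by have := Finset.mem_range.1 hi; omega)
      rw [← h2] at *
      rw [this]
    · intro habs
      exact absurd (Finset.mem_range.2 hk) habs
  · rw [if_neg hmk]
    refine Finset.sum_eq_zero fun i hi => ?_
    apply Matrix.single_apply_of_ne
    rintro ⟨h1, h2⟩
    have hilt : i < n := Finset.mem_range.1 hi
    have e1 : ((↑(i+1) : Fin (n+1)) : ℕ) = i + 1 := Fin.val_cast_of_lt (by omega)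
    have e2 : ((↑i : Fin (n+1)) : ℕ) = i := Fin.val_cast_of_lt (by omega)
    apply hmk
    rw [← h1, ← h2, e1, e2]

lemma Nmat_pow_apply (n : ℕ) : ∀ (j : ℕ) (m k : Fin (n+1)),
    ((Nmat n) ^ j) m k = if (m : ℕ) = (k : ℕ) + j then
      ((∏ i ∈ Finset.Ico (k : ℕ) (m : ℕ), (i*(i+1)) : ℕ) : ℝ) else 0 := by
  intro j
  induction j with
  | zero =>
    intro m k
    rw [pow_zero]
    by_cases h : m = k
    · subst h
      simp [Matrix.one_apply]
    · rw [Matrix.one_apply_ne h, if_neg]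
      intro hc
      exact h (Fin.ext (by omega))
  | succ j ih =>
    intro m k
    rw [pow_succ, Matrix.mul_apply]
    by_cases hk1 : (k : ℕ) + 1 ≤ n
    · set l0 : Fin (n+1) := (↑((k:ℕ)+1) : Fin (n+1)) with hl0
      have hl0v : (l0 : ℕ) = (k : ℕ) + 1 := Fin.val_cast_of_lt (by omega)
      rw [Finset.sum_eq_single l0]
      · rw [ih m l0, Nmat_apply]
        rw [if_pos (by omega : (l0:ℕ) = (k:ℕ) + 1)]
        by_cases hm : (m : ℕ) = (k : ℕ) + (j + 1)
        · rw [if_pos (by omega : (m:ℕ) = (l0:ℕ) + j), if_pos hm, hl0v]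
          have hkm : (k : ℕ) < (m : ℕ) := by omega
          rw [Finset.prod_eq_prod_Ico_succ_bot hkm (fun i => i * (i+1))]
          push_cast
          ring
        · rw [if_neg (by omega : ¬ (m:ℕ) = (l0:ℕ) + j), if_neg hm, zero_mul]
      · intro l _ hne
        rw [Nmat_apply, if_neg, mul_zero]
        intro hc
        exact hne (Fin.ext (by omega))
      · intro habs
        exact absurd (Finset.mem_univ l0) habs
    · have hz : ∀ l : Fin (n+1), Nmat n l k = 0 := fun l => by
        rw [Nmat_apply, if_neg]
        have := l.isLt; omega
      rw [if_neg (by have := m.isLt; omega : ¬ (m:ℕ) = (k:ℕ) + (j+1))]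
      refine Finset.sum_eq_zero fun l _ => by rw [hz l, mul_zero]

lemma Nmat_pow_zero (n : ℕ) {j : ℕ} (hj : n + 1 ≤ j) : (Nmat n) ^ j = 0 := by
  ext m k
  rw [Nmat_pow_apply, if_neg (by have := m.isLt; omega), Matrix.zero_apply]

lemma lah_key (m k : ℕ) (hk : k ≤ m) :
    lah m k * (m - k).factorial = ∏ i ∈ Finset.Ico k m, (i * (i+1)) := by
  rcases Nat.eq_zero_or_pos k with hk0 | hkpos
  · subst hk0
    rcases Nat.eq_zero_or_pos m with hm0 | hmpos
    · subst hm0; simp [lah]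
    · have h1 : lah m 0 = 0 := by
        rw [lah, if_neg (by omega), if_neg (by omega)]
      rw [h1, zero_mul]
      refine (Finset.prod_eq_zero (Finset.mem_Ico.2 ⟨le_rfl, hmpos⟩) (by norm_num)).symm
  · have hlah : lah m k = m.factorial / k.factorial * (m-1).choose (k-1) := by
      rw [lah, if_neg (by omega), if_pos ⟨hkpos, hk⟩]
    have hA : m.factorial / k.factorial * k.factorial = m.factorial :=
      Nat.div_mul_cancel (Nat.factorial_dvd_factorial hk)
    have hB : (m-1).choose (k-1) * (k-1).factorial * (m - k).factorial = (m-1).factorial := by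
      have := Nat.choose_mul_factorial_mul_factorial (by omega : k - 1 ≤ m - 1)
      rwa [(by omega : m - 1 - (k - 1) = m - k)] at this
    have hC : (∏ i ∈ Finset.Ico k m, (i * (i+1))) * (k.factorial * (k-1).factorial)
        = m.factorial * (m-1).factorial := by
      clear hlah hA hB
      induction m, hk using Nat.le_induction with
      | base => simp
      | succ m hkm ihm =>
        have hm1 : 1 ≤ m := le_trans hkpos hkm
        calc (∏ i ∈ Finset.Ico k (m+1), (i * (i+1))) * (k.factorial * (k-1).factorial)
            = ((∏ i ∈ Finset.Ico k m, (i * (i+1))) * (k.factorial * (k-1).factorial))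
              * (m * (m+1)) := by
              rw [Finset.prod_Ico_succ_top hkm]; ring
          _ = (m.factorial * (m-1).factorial) * (m * (m+1)) := by rw [ihm]
          _ = ((m+1) * m.factorial) * (m * (m-1).factorial) := by ring
          _ = (m+1).factorial * m.factorial := by
              rw [Nat.factorial_succ, Nat.mul_factorial_pred (by omega)]
    have hpos : 0 < k.factorial * (k-1).factorial :=
      Nat.mul_pos k.factorial_pos (k-1).factorial_pos
    apply Nat.eq_of_mul_eq_mul_right hpos
    calc lah m k * (m - k).factorial * (k.factorial * (k-1).factorial)
        = (m.factorial / k.factorial * k.factorial)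
          * ((m-1).choose (k-1) * (k-1).factorial * (m - k).factorial) := by
          rw [hlah]; ring
      _ = m.factorial * (m-1).factorial := by rw [hA, hB]
      _ = (∏ i ∈ Finset.Ico k m, (i * (i+1))) * (k.factorial * (k-1).factorial) := hC.symm

lemma Nmat_def (n : ℕ) : Nmat n = ∑ i ∈ Finset.range n,
    Matrix.single ((↑(i+1) : Fin (n+1))) ((↑i : Fin (n+1))) (((i*(i+1) : ℕ) : ℝ)) := rfl

noncomputable def Emat (n : ℕ) : Matrix (Fin (n+1)) (Fin (n+1)) ℝ :=
  ∑ j ∈ Finset.range (n+1), ((j.factorial : ℝ))⁻¹ • (Nmat n) ^ j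

lemma lah_eq_prod_div (m k : ℕ) (hk : k ≤ m) :
    (lah m k : ℝ) = ((m-k).factorial : ℝ)⁻¹
      * ((∏ i ∈ Finset.Ico k m, (i*(i+1)) : ℕ) : ℝ) := by
  have := lah_key m k hk
  have hcast : (lah m k : ℝ) * ((m-k).factorial : ℝ)
      = ((∏ i ∈ Finset.Ico k m, (i*(i+1)) : ℕ) : ℝ) := by
    rw [← Nat.cast_mul, this]
  have hfpos : (0:ℝ) < ((m-k).factorial : ℝ) := by
    exact_mod_cast (m-k).factorial_pos
  field_simp at hcast ⊢
  linarith [hcast]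

lemma Emat_apply_lah (n : ℕ) (m k : Fin (n+1)) : Emat n m k = (lah (m : ℕ) (k : ℕ) : ℝ) := by
  rw [Emat, Matrix.sum_apply]
  by_cases hk : (k : ℕ) ≤ (m : ℕ)
  · rw [Finset.sum_eq_single ((m : ℕ) - (k : ℕ))]
    · simp only [Matrix.smul_apply, smul_eq_mul]
      rw [Nmat_pow_apply, if_pos (by omega)]
      rw [lah_eq_prod_div (m : ℕ) (k : ℕ) hk]
    · intro j _ hj
      simp only [Matrix.smul_apply, smul_eq_mul]
      rw [Nmat_pow_apply, if_neg (by omega), mul_zero]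
    · intro habs
      exact absurd (Finset.mem_range.2 (by have := m.isLt; omega)) habs
  · have hlz : lah (m : ℕ) (k : ℕ) = 0 := by
      rw [lah, if_neg (by omega), if_neg (by omega)]
    rw [hlz]
    push_cast
    refine Finset.sum_eq_zero fun j _ => ?_
    simp only [Matrix.smul_apply, smul_eq_mul]
    rw [Nmat_pow_apply, if_neg (by omega), mul_zero]

lemma Bt_pow_eq (n t : ℕ) (ht : n ≤ t) :
    ((1 : Matrix (Fin (n+1)) (Fin (n+1)) ℝ) + ((t:ℝ))⁻¹ • Nmat n) ^ t
      = ∑ j ∈ Finset.range (n+1), ((t.choose j : ℝ) * (((t:ℝ))⁻¹)^j) • (Nmat n) ^ j := by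
  have hcomm : Commute (((t:ℝ))⁻¹ • Nmat n) (1 : Matrix (Fin (n+1)) (Fin (n+1)) ℝ) :=
    Commute.one_right _
  rw [show (1 + ((t:ℝ))⁻¹ • Nmat n) = (((t:ℝ))⁻¹ • Nmat n + 1) from add_comm _ _,
    Commute.add_pow hcomm]
  have hstep : ∀ j ∈ Finset.range (t+1),
      (((t:ℝ))⁻¹ • Nmat n) ^ j * (1:Matrix (Fin (n+1)) (Fin (n+1)) ℝ) ^ (t - j) * (t.choose j : Matrix (Fin (n+1)) (Fin (n+1)) ℝ)
        = ((t.choose j : ℝ) * (((t:ℝ))⁻¹)^j) • (Nmat n) ^ j := by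
    intro j _
    rw [one_pow, mul_one, ← (Nat.cast_commute (t.choose j)
      ((((t:ℝ))⁻¹ • Nmat n) ^ j)).eq, ← nsmul_eq_mul, ← Nat.cast_smul_eq_nsmul ℝ,
      _root_.smul_pow, smul_smul]
  rw [Finset.sum_congr rfl hstep]
  rw [← Finset.sum_subset (Finset.range_subset_range.2 (by omega : n + 1 ≤ t + 1))]
  intro j _ hj
  rw [Nmat_pow_zero n (by simpa using hj), smul_zero]

lemma coeff_tendsto (j : ℕ) :
    Tendsto (fun t : ℕ => (t.choose j : ℝ) * (((t:ℝ))⁻¹)^j) atTop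
      (nhds (((j.factorial : ℝ))⁻¹)) := by
  have hbase : Tendsto (fun t : ℕ => ((j.factorial:ℝ))⁻¹ * ∏ i ∈ Finset.range j, (1 - (i:ℝ)/t))
      atTop (nhds (((j.factorial:ℝ))⁻¹ * ∏ i ∈ Finset.range j, (1:ℝ))) := by
    apply Tendsto.const_mul
    apply tendsto_finset_prod
    intro i _
    have h1 : Tendsto (fun t : ℕ => (i:ℝ)/t) atTop (nhds 0) := by
      have := tendsto_one_div_atTop_nhds_zero_nat.const_mul (i:ℝ)
      simpa [div_eq_mul_inv, mul_comm] using this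
    have h2 : Tendsto (fun _ : ℕ => (1:ℝ)) atTop (nhds 1) := tendsto_const_nhds
    simpa using h2.sub h1
  rw [Finset.prod_const_one, mul_one] at hbase
  apply hbase.congr'
  filter_upwards [eventually_ge_atTop (max j 1)] with t ht
  have htj : j ≤ t := le_trans (le_max_left _ _) ht
  have ht1 : 1 ≤ t := le_trans (le_max_right _ _) ht
  have ht0 : (t:ℝ) ≠ 0 := by positivity
  have hdesc : ((t.descFactorial j : ℕ) : ℝ) = ∏ i ∈ Finset.range j, ((t:ℝ) - i) := by
    rw [Nat.descFactorial_eq_prod_range, Nat.cast_prod]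
    refine Finset.prod_congr rfl fun i hi => ?_
    have : i ≤ t := by have := Finset.mem_range.1 hi; omega
    push_cast [Nat.cast_sub this]
    ring
  have hchoose : (t.choose j : ℝ) = ((t.descFactorial j : ℕ) : ℝ) / (j.factorial : ℝ) := by
    rw [Nat.choose_eq_descFactorial_div_factorial,
      Nat.cast_div (Nat.factorial_dvd_descFactorial t j)
        (by exact_mod_cast j.factorial_pos.ne')]
  have hprod : ∏ i ∈ Finset.range j, (1 - (i:ℝ)/t)
      = (∏ i ∈ Finset.range j, ((t:ℝ) - i)) * (((t:ℝ))⁻¹)^j := by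
    have : (((t:ℝ))⁻¹)^j = ∏ _i ∈ Finset.range j, ((t:ℝ))⁻¹ := by
      rw [Finset.prod_const, Finset.card_range]
    rw [this, ← Finset.prod_mul_distrib]
    refine Finset.prod_congr rfl fun i _ => ?_
    field_simp
  rw [hchoose, hdesc, hprod]
  ring

lemma TNN_Bt (n t : ℕ) : TNN ((1 : Matrix (Fin (n+1)) (Fin (n+1)) ℝ) + ((t:ℝ))⁻¹ • Nmat n) := by
  have h : (1 : Matrix (Fin (n+1)) (Fin (n+1)) ℝ) + ((t:ℝ))⁻¹ • Nmat n
      = 1 + ∑ i ∈ Finset.range n, Matrix.single ((↑(i+1) : Fin (n+1))) ((↑i : Fin (n+1)))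
        (((t:ℝ))⁻¹ * ((i*(i+1) : ℕ) : ℝ)) := by
    rw [Nmat_def, Finset.smul_sum]
    congr 1
    refine Finset.sum_congr rfl fun i _ => ?_
    rw [Matrix.smul_single]
    rfl
  rw [h]
  apply TNN_unit_lower
  intro i
  positivity

lemma entry_tendsto (n : ℕ) (m k : Fin (n+1)) :
    Tendsto (fun t : ℕ => (((1 : Matrix (Fin (n+1)) (Fin (n+1)) ℝ) + ((t:ℝ))⁻¹ • Nmat n) ^ t) m k)
      atTop (nhds (Emat n m k)) := by
  have hbase : Tendsto (fun t : ℕ => ∑ j ∈ Finset.range (n+1),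
      ((t.choose j : ℝ) * (((t:ℝ))⁻¹)^j) * ((Nmat n ^ j) m k)) atTop
      (nhds (∑ j ∈ Finset.range (n+1), ((j.factorial : ℝ))⁻¹ * ((Nmat n ^ j) m k))) := by
    apply tendsto_finset_sum
    intro j _
    exact (coeff_tendsto j).mul_const _
  have hE : Emat n m k = ∑ j ∈ Finset.range (n+1), ((j.factorial : ℝ))⁻¹ * ((Nmat n ^ j) m k) := by
    rw [Emat, Matrix.sum_apply]
    refine Finset.sum_congr rfl fun j _ => ?_
    simp
  rw [hE]
  apply hbase.congr'
  filter_upwards [eventually_ge_atTop n] with t ht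
  rw [Bt_pow_eq n t ht, Matrix.sum_apply]
  refine Finset.sum_congr rfl fun j _ => ?_
  simp


theorem statement19 (n : ℕ) :
    TNN (Matrix.of fun m k : Fin (n+1) => (lah (m : ℕ) (k : ℕ) : ℝ)) := by
  have hL : (Matrix.of fun m k : Fin (n+1) => (lah (m : ℕ) (k : ℕ) : ℝ)) = Emat n := by
    ext m k
    rw [Emat_apply_lah]
    rfl
  rw [hL]
  intro r ρ γ hρ hγ
  have htend : Tendsto (fun t : ℕ =>
      ((((1 : Matrix (Fin (n+1)) (Fin (n+1)) ℝ) + ((t:ℝ))⁻¹ • Nmat n) ^ t).submatrix ρ γ).det)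
      atTop (nhds (((Emat n).submatrix ρ γ).det)) := by
    simp only [Matrix.det_apply']
    apply tendsto_finset_sum
    intro σ _
    apply Tendsto.const_mul
    apply tendsto_finset_prod
    intro i _
    exact entry_tendsto n (ρ (σ i)) (γ i)
  refine ge_of_tendsto htend ?_
  filter_upwards with t
  exact TNN_pow (TNN_Bt n t) t r ρ γ hρ hγ
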